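/- Let f : ℝ^d → ℝ be convex and M-Lipschitz (M > 0), with nonempty set of minimizers X⋆ and minimum value f⋆. Fix ε > 0 and let (x^(i)) and (g^(i)) be sequences in ℝ^d such that for every i, g^(i) is a subgradient of f at x^(i), and x^(i+1) = x^(i) − (ε/‖g^(i)‖₂²) g^(i) whenever g^(i) ≠ 0, while x^(i+1) = x^(i) whenever g^(i) = 0. Then for any reals δ, D with δ ≥ 2ε and D > 0, if f(x^(0)) − f⋆ ≥ δ and dist(x^(0), X⋆) ≤ D, there exists a natural number i with i ≤ M²D²/(2ε(δ − (3/2)ε)) such that f(x^(i)) ≤ f(x^(0)) − ε. -/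

import Mathlib

open scoped RealInnerProductSpace

/-- **Decrement guarantee for the subgradient method** (Proposition: subgradient method).
`f` is convex and `M`-Lipschitz with nonempty minimizer set `Xstar` and minimum value
`fstar`. The iterates satisfy `x (i+1) = x i - (ε/‖g i‖²) • g i` when `g i ≠ 0` and
`x (i+1) = x i` when `g i = 0`, where `g i` is a subgradient of `f` at `x i`.
If `f (x 0) - fstar ≥ δ ≥ 2ε` and `dist (x 0) Xstar ≤ D > 0`, there is
`i ≤ M²D²/(2ε(δ - (3/2)ε))` with `f (x i) ≤ f (x 0) - ε`. -/
theorem subgradient_decrement {d : ℕ} (f : EuclideanSpace ℝ (Fin d) → ℝ)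
    (M : ℝ) (hM : 0 < M)
    (hconv : ConvexOn ℝ Set.univ f)
    (hlip : ∀ z w, |f z - f w| ≤ M * ‖z - w‖)
    (fstar : ℝ) (Xstar : Set (EuclideanSpace ℝ (Fin d)))
    (hXstar : Xstar = {z | f z = fstar})
    (hlb : ∀ z, fstar ≤ f z)
    (hne : Xstar.Nonempty)
    (ε : ℝ) (hε : 0 < ε)
    (x g : ℕ → EuclideanSpace ℝ (Fin d))
    (hsub : ∀ i, ∀ z, f z ≥ f (x i) + ⟪g i, z - x i⟫)
    (hstep : ∀ i, (g i ≠ 0 → x (i + 1) = x i - (ε / ‖g i‖ ^ 2) • g i) ∧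
      (g i = 0 → x (i + 1) = x i))
    (δ D : ℝ) (hδε : δ ≥ 2 * ε) (hD : 0 < D)
    (hgap : f (x 0) - fstar ≥ δ)
    (hdist : Metric.infDist (x 0) Xstar ≤ D) :
    ∃ i : ℕ, (i : ℝ) ≤ M ^ 2 * D ^ 2 / (2 * ε * (δ - (3 / 2) * ε)) ∧
      f (x i) ≤ f (x 0) - ε := by
  by_contra hcon
  push_neg at hcon
  set B : ℝ := M ^ 2 * D ^ 2 / (2 * ε * (δ - (3 / 2) * ε)) with hB
  have hδ3 : 0 < δ - 3 / 2 * ε := by linarith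
  set c : ℝ := 2 * ε * (δ - 3 / 2 * ε) / M ^ 2 with hc
  have hM2 : (0:ℝ) < M ^ 2 := by positivity
  have hcpos : 0 < c := by positivity
  have hX : (2 * ε * (δ - 3 / 2 * ε)) ≠ 0 := by positivity
  have hBc : B * c = D ^ 2 := by
    rw [hB, hc, div_mul_div_comm, div_eq_iff (mul_ne_zero hX hM2.ne')]
    ring
  have hBpos : 0 < B := by
    rw [hB]; positivity
  -- find a closest minimizer
  have hclosed : IsClosed Xstar := by
    rw [hXstar]
    have hcont : Continuous f := by
      refine LipschitzWith.continuous (K := ⟨M, hM.le⟩) ?_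
      apply LipschitzWith.of_dist_le_mul
      intro z w
      exact (by simpa [Real.dist_eq, dist_eq_norm] using hlip z w : dist (f z) (f w) ≤ M * dist z w)
    exact isClosed_eq hcont continuous_const
  obtain ⟨xs, hxsX, hxs⟩ := hclosed.exists_infDist_eq_dist hne (x 0)
  have hfxs : f xs = fstar := by rw [hXstar] at hxsX; exact hxsX
  have hd0 : ‖x 0 - xs‖ ≤ D := by
    rw [← dist_eq_norm, ← hxs]; exact hdist
  -- subgradient norm bound
  have hgM : ∀ i, ‖g i‖ ≤ M := by
    intro i
    rcases eq_or_ne (g i) 0 with h0 | h0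
    · simp [h0]; exact hM.le
    have h1 := hsub i (x i + g i)
    have h2 : ⟪g i, x i + g i - x i⟫ = ‖g i‖ ^ 2 := by
      rw [add_sub_cancel_left, real_inner_self_eq_norm_sq]
    have h3 := hlip (x i + g i) (x i)
    have h4 : |f (x i + g i) - f (x i)| ≤ M * ‖g i‖ := by
      simpa using h3
    have hgpos : 0 < ‖g i‖ := norm_pos_iff.2 h0
    have : ‖g i‖ ^ 2 ≤ M * ‖g i‖ := by
      rw [h2] at h1
      have := abs_le.1 h4
      linarith [this.2]
    nlinarith
  -- main induction
  have key : ∀ n : ℕ, (∀ i, i < n → f (x 0) - ε < f (x i)) →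
      ‖x n - xs‖ ^ 2 ≤ D ^ 2 - n * c := by
    intro n
    induction n with
    | zero =>
      intro _
      simpa using pow_le_pow_left₀ (norm_nonneg _) hd0 2
    | succ n ih =>
      intro h
      have hn := ih (fun i hi => h i (hi.trans (Nat.lt_succ_self n)))
      have hfn : f (x 0) - ε < f (x n) := h n (Nat.lt_succ_self n)
      have hfgap : δ - ε < f (x n) - fstar := by linarith
      have hgn : g n ≠ 0 := by
        intro h0
        have h1 := hsub n xs
        rw [h0] at h1
        simp at h1
        have : fstar ≥ f (x n) := hfxs ▸ h1
        linarith
      have hgpos : 0 < ‖g n‖ := norm_pos_iff.2 hgn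
      have hs2 : (0:ℝ) < ‖g n‖ ^ 2 := by positivity
      have hsM : ‖g n‖ ^ 2 ≤ M ^ 2 := by nlinarith [hgM n, norm_nonneg (g n)]
      have hstepn := (hstep n).1 hgn
      set t : ℝ := ε / ‖g n‖ ^ 2 with ht
      have hexp : ‖x (n+1) - xs‖ ^ 2
          = ‖x n - xs‖ ^ 2 - 2 * t * ⟪g n, x n - xs⟫ + t ^ 2 * ‖g n‖ ^ 2 := by
        rw [hstepn]
        have heq : x n - t • g n - xs = (x n - xs) - t • g n := by abel
        rw [heq, norm_sub_sq_real, real_inner_smul_right, norm_smul, real_inner_comm]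
        simp [mul_pow, sq_abs]
        ring
      have hinner : f (x n) - fstar ≤ ⟪g n, x n - xs⟫ := by
        have h1 := hsub n xs
        have h2 : ⟪g n, xs - x n⟫ = -⟪g n, x n - xs⟫ := by
          rw [← inner_neg_right]
          congr 1
          abel
        rw [h2, hfxs] at h1
        linarith
      have hIB : δ - ε < ⟪g n, x n - xs⟫ := lt_of_lt_of_le hfgap hinner
      have hts : t * ‖g n‖ ^ 2 = ε := by
        rw [ht, div_mul_cancel₀ _ hs2.ne']
      have htpos : 0 < t := by positivity
      have htM : ε / M ^ 2 ≤ t := by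
        rw [ht]
        exact div_le_div_of_nonneg_left hε.le hs2 hsM
      have hdec : c ≤ 2 * t * ⟪g n, x n - xs⟫ - t ^ 2 * ‖g n‖ ^ 2 := by
        have h1 : t ^ 2 * ‖g n‖ ^ 2 = t * ε := by
          rw [pow_two, mul_assoc, hts]
        rw [h1]
        have h2' : t * (δ - ε) < t * ⟪g n, x n - xs⟫ :=
          mul_lt_mul_of_pos_left hIB htpos
        have h2 : t * (2 * δ - 3 * ε) ≤ 2 * t * ⟪g n, x n - xs⟫ - t * ε := by
          linarith
        have h3 : c ≤ t * (2 * δ - 3 * ε) := by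
          have : c = (ε / M ^ 2) * (2 * δ - 3 * ε) := by rw [hc]; ring
          rw [this]
          apply mul_le_mul_of_nonneg_right htM
          linarith
        linarith
      have : ‖x (n+1) - xs‖ ^ 2 ≤ ‖x n - xs‖ ^ 2 - c := by
        rw [hexp]; linarith
      push_cast
      linarith
  -- contradiction
  set N : ℕ := ⌊B⌋₊ with hN
  have hall : ∀ i, i < N + 1 → f (x 0) - ε < f (x i) := by
    intro i hi
    apply hcon
    have h1 : (i:ℝ) ≤ N := Nat.cast_le.2 (Nat.lt_succ_iff.1 hi)
    exact h1.trans (Nat.floor_le hBpos.le)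
  have hkey := key (N + 1) hall
  have hlt : B < (N:ℝ) + 1 := Nat.lt_floor_add_one B
  have hnn : 0 ≤ ‖x (N+1) - xs‖ ^ 2 := sq_nonneg _
  have : ((N:ℝ) + 1) * c > D ^ 2 := by
    rw [← hBc]
    exact mul_lt_mul_of_pos_right hlt hcpos
  push_cast at hkey
  linarith
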